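/- Let ψ : A → B be a ring homomorphism between reduced Noetherian rings such that (1) ψ is injective, (2) ψ is finite (B is a finitely generated A-module via ψ), and (3) B is contained in the total ring of fractions Q(ψ(A)) of ψ(A). Then ψ induces an isomorphism of the integral closures A̅ → B̅ (where A̅ is the integral closure of A in Q(A) and B̅ of B in Q(B)). In particular, if B is integrally closed in Q(B), then A̅ ≅ B. -/

import Mathlib

set_option synthInstance.maxHeartbeats 1000000
set_option maxHeartbeats 1000000

/-- An injective finite homomorphism `ψ : A → B` of reduced Noetherian rings
with `B ⊆ Q(ψ(A))` induces an isomorphism `Q(A) ≅ Q(B)` carrying the integral closure of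
`A` onto the integral closure of `B`; in particular if `B` is integrally closed then
`A̅ ≅ B`. -/
theorem normalization_of_finite_birational_extension
    (A B : Type*) [CommRing A] [CommRing B] [IsReduced A] [IsReduced B]
    [IsNoetherianRing A] [IsNoetherianRing B]
    (ψ : A →+* B) (hinj : Function.Injective ψ) (hfin : ψ.Finite)
    (hfrac : ∀ b : B, ∃ a s : A, ψ s ∈ nonZeroDivisors B ∧ b * ψ s = ψ a) :
    ∃ f : FractionRing A →+* FractionRing B,
      (∀ a : A, f (algebraMap A (FractionRing A) a) = algebraMap B (FractionRing B) (ψ a)) ∧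
      Function.Bijective f ∧
      f '' (integralClosure A (FractionRing A)) =
        (integralClosure B (FractionRing B) : Set (FractionRing B)) ∧
      ((∀ x : FractionRing B, IsIntegral B x → x ∈ Set.range (algebraMap B (FractionRing B))) →
        Nonempty ((integralClosure A (FractionRing A)) ≃+* B)) := by
  classical
  set QA := FractionRing A with hQA
  set QB := FractionRing B with hQB
  set α : A →+* QA := algebraMap A QA with hα
  set β : B →+* QB := algebraMap B QB with hβ
  have hαinj : Function.Injective α := IsFractionRing.injective A QA
  have hβinj : Function.Injective β := IsFractionRing.injective B QB
  -- non-zero-divisors of A map to non-zero-divisors of B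
  have hψnzd : ∀ s ∈ nonZeroDivisors A, ψ s ∈ nonZeroDivisors B := by
    intro s hs
    rw [mem_nonZeroDivisors_iff_right] at hs ⊢
    intro b hb
    obtain ⟨a, t, ht, hbt⟩ := hfrac b
    have h1 : ψ (a * s) = 0 := by
      rw [map_mul, ← hbt, mul_assoc, mul_comm (ψ t), ← mul_assoc, hb, zero_mul]
    have ha : a = 0 := hs a (hinj (by simpa using h1))
    have hbt0 : b * ψ t = 0 := by rw [hbt, ha, map_zero]
    exact mem_nonZeroDivisors_iff_right.mp ht b hbt0
  set g : A →+* QB := β.comp ψ with hg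
  have hginj : Function.Injective g := hβinj.comp hinj
  have hgu : ∀ s : nonZeroDivisors A, IsUnit (g s) :=
    fun ⟨s, hs⟩ => IsLocalization.map_units QB ⟨ψ s, hψnzd s hs⟩
  set f : QA →+* QB := IsLocalization.lift (M := nonZeroDivisors A) hgu with hf
  have hcomm : ∀ a : A, f (α a) = g a := fun a => IsLocalization.lift_eq hgu a
  -- injectivity
  have hfinj : Function.Injective f := by
    rw [injective_iff_map_eq_zero]
    intro x hx
    obtain ⟨⟨a, s⟩, hx'⟩ := IsLocalization.surj (M := nonZeroDivisors A) x
    have h1 : g a = 0 := by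
      rw [← hcomm, ← hx', map_mul, hcomm, hx, zero_mul]
    have ha : a = 0 := hginj (by simpa using h1)
    have h3 : x * α (s : A) = 0 := by rw [hx', ha, map_zero]
    have hu : IsUnit (α (s : A)) := IsLocalization.map_units QA s
    have h4 : x * α (s : A) = 0 * α (s : A) := by rw [h3, zero_mul]
    exact hu.mul_right_cancel h4
  -- surjectivity
  have hfsurj : Function.Surjective f := by
    intro y
    obtain ⟨⟨b, t⟩, hy⟩ := IsLocalization.surj (M := nonZeroDivisors B) y
    obtain ⟨a₁, s₁, hs₁, hb1⟩ := hfrac b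
    obtain ⟨a₂, s₂, hs₂, ht2⟩ := hfrac (t : B)
    have hd : ψ (a₂ * s₁) ∈ nonZeroDivisors B := by
      rw [map_mul, ← ht2]
      exact mul_mem (mul_mem t.2 hs₂) hs₁
    have hdA : a₂ * s₁ ∈ nonZeroDivisors A := by
      rw [mem_nonZeroDivisors_iff_right]
      intro x hx
      have hx2 : ψ x * ψ (a₂ * s₁) = 0 := by rw [← map_mul, hx, map_zero]
      exact hinj (by simpa using mem_nonZeroDivisors_iff_right.mp hd (ψ x) hx2)
    refine ⟨IsLocalization.mk' QA (a₁ * s₂) ⟨a₂ * s₁, hdA⟩, ?_⟩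
    have hmk : IsLocalization.mk' QA (a₁ * s₂) ⟨a₂ * s₁, hdA⟩ * α (a₂ * s₁) = α (a₁ * s₂) :=
      IsLocalization.mk'_spec QA (a₁ * s₂) ⟨a₂ * s₁, hdA⟩
    have hu : IsUnit (g (a₂ * s₁)) := hgu ⟨a₂ * s₁, hdA⟩
    have key : f (IsLocalization.mk' QA (a₁ * s₂) ⟨a₂ * s₁, hdA⟩) * g (a₂ * s₁) = g (a₁ * s₂) := by
      rw [← hcomm, ← hcomm, ← map_mul, hmk]
    have key2 : y * g (a₂ * s₁) = g (a₁ * s₂) := by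
      have h1 : g (a₂ * s₁) = β (t : B) * β (ψ s₂) * β (ψ s₁) := by
        simp only [hg, RingHom.comp_apply, map_mul, ← ht2]
      calc y * g (a₂ * s₁) = (y * β (t : B)) * (β (ψ s₂) * β (ψ s₁)) := by rw [h1]; ring
        _ = β b * (β (ψ s₂) * β (ψ s₁)) := by rw [hy]
        _ = β (b * ψ s₁) * β (ψ s₂) := by rw [map_mul, ← mul_assoc, mul_comm (β b)]; ring
        _ = g (a₁ * s₂) := by rw [hb1, hg]; simp [map_mul]
    exact hu.mul_right_cancel (key.trans key2.symm)
  -- integrality transfer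
  letI : Algebra A B := ψ.toAlgebra
  haveI : Algebra.IsIntegral A B := ⟨hfin.to_isIntegral⟩
  have halg : algebraMap A QB = g := by
    rw [IsScalarTower.algebraMap_eq A B QB]; rfl
  have hcomp : f.comp α = g := RingHom.ext hcomm
  have hint : ∀ x : QA, IsIntegral A x ↔ IsIntegral B (f x) := by
    intro x
    constructor
    · rintro ⟨p, hp, hpx⟩
      refine ⟨p.map ψ, hp.map ψ, ?_⟩
      have : Polynomial.eval₂ β (f x) (p.map ψ) = Polynomial.eval₂ g (f x) p :=
        Polynomial.eval₂_map ψ β (f x)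
      have h2 : f (Polynomial.eval₂ α x p) = Polynomial.eval₂ g (f x) p := by
        rw [Polynomial.hom_eval₂, hcomp]
      show Polynomial.eval₂ β (f x) (p.map ψ) = 0
      rw [this, ← h2, hpx, map_zero]
    · intro hy
      have hyA : IsIntegral A (f x) := isIntegral_trans (f x) hy
      obtain ⟨p, hp, hpx⟩ := hyA
      rw [show (algebraMap A QB) = g from halg] at hpx
      refine ⟨p, hp, ?_⟩
      have h2 : f (Polynomial.eval₂ α x p) = Polynomial.eval₂ g (f x) p := by
        rw [Polynomial.hom_eval₂, hcomp]
      have : f (Polynomial.eval₂ α x p) = 0 := by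
        rw [h2]; exact hpx
      have := hfinj (by rw [this, map_zero] : f (Polynomial.eval₂ α x p) = f 0)
      exact this
  have himg : f '' (integralClosure A QA) = (integralClosure B QB : Set QB) := by
    ext y
    constructor
    · rintro ⟨x, hx, rfl⟩
      exact (hint x).mp hx
    · intro hy
      obtain ⟨x, rfl⟩ := hfsurj y
      exact ⟨x, (hint x).mpr hy, rfl⟩
  refine ⟨f, hcomm, ⟨hfinj, hfsurj⟩, himg, ?_⟩
  -- the normal case
  intro hnorm
  have hrange : (integralClosure B QB : Set QB) = Set.range β := by
    apply Set.Subset.antisymm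
    · intro y hy; exact hnorm y hy
    · rintro y ⟨b, hb⟩; rw [← hb]; exact (integralClosure B QB).algebraMap_mem b
  -- build the ring equivalence
  set j : (integralClosure A QA) →+* QB := f.comp (integralClosure A QA).toSubring.subtype with hj
  have hjmem : ∀ x : (integralClosure A QA), j x ∈ β.range := by
    intro x
    have : f x ∈ f '' (integralClosure A QA) := ⟨x, x.2, rfl⟩
    rw [himg, hrange] at this
    exact this
  set j' : (integralClosure A QA) →+* β.range := j.codRestrict β.range hjmem with hj'
  have hrr : Function.Bijective β.rangeRestrict :=
    ⟨fun x y h => hβinj (congrArg Subtype.val h), β.rangeRestrict_surjective⟩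
  set e : B ≃+* β.range := RingEquiv.ofBijective β.rangeRestrict hrr with he
  have hj'bij : Function.Bijective j' := by
    constructor
    · intro x y h
      have : f x = f y := congrArg Subtype.val h
      exact Subtype.ext (hfinj this)
    · rintro ⟨z, b, rfl⟩
      have : β b ∈ f '' (integralClosure A QA) := by
        rw [himg, hrange]; exact ⟨b, rfl⟩
      obtain ⟨x, hx, hfx⟩ := this
      exact ⟨⟨x, hx⟩, Subtype.ext hfx⟩
  exact ⟨(RingEquiv.ofBijective j' hj'bij).trans e.symm⟩
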